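/- The differential operators L_m := Σ_{ℓ≥0} ((2ℓ+1)/2)(t_ℓ - 2δ_{ℓ,0}) ∂/∂t_{ℓ+m} + (1/4) Σ_{ℓ=0}^{m-1} ∂²/∂t_ℓ ∂t_{m-1-ℓ} + ((1-4ν²)/16) δ_{m,0}, for m ≥ 0, satisfy the Virasoro commutation relations [L_m, L_n] = (m-n) L_{m+n} for all m, n ≥ 0. -/

import Mathlib

open MvPolynomial

/-- The Virasoro operator `L_m` acting on polynomials in the variables `t_0, t_1, t_2, ...`
(represented as `MvPolynomial ℕ ℝ`):
`L_m = Σ_{ℓ≥0} ((2ℓ+1)/2)(t_ℓ - 2δ_{ℓ,0}) ∂/∂t_{ℓ+m}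
      + (1/4) Σ_{ℓ=0}^{m-1} ∂²/∂t_ℓ∂t_{m-1-ℓ} + ((1-4ν²)/16) δ_{m,0}`. -/
noncomputable def virasoroL (ν : ℝ) (m : ℕ) (p : MvPolynomial ℕ ℝ) : MvPolynomial ℕ ℝ :=
  (∑ᶠ ℓ : ℕ, ((2 * (ℓ : ℝ) + 1) / 2) •
      ((X ℓ - if ℓ = 0 then 2 else 0) * pderiv (ℓ + m) p))
  + (1 / 4 : ℝ) • ∑ ℓ ∈ Finset.range m, pderiv ℓ (pderiv (m - 1 - ℓ) p)
  + (if m = 0 then ((1 - 4 * ν ^ 2) / 16 : ℝ) • p else 0)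

open MvPolynomial Finset

/-! ### Auxiliary definitions and lemmas -/

lemma pderiv_comm' (i j : ℕ) (p : MvPolynomial ℕ ℝ) :
    pderiv i (pderiv j p) = pderiv j (pderiv i p) := by
  have hX : ∀ (a b k : ℕ), pderiv a (pderiv b (X k : MvPolynomial ℕ ℝ)) = 0 := by
    intro a b k
    by_cases h : b = k
    · subst h; rw [pderiv_X_self]; simp
    · rw [pderiv_X_of_ne (Ne.symm h)]; simp
  induction p using MvPolynomial.induction_on with
  | C a => simp
  | add p q hp hq => simp [map_add, hp, hq]
  | mul_X p k hp =>
      simp only [pderiv_mul, map_add, hX, mul_zero, add_zero, hp]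
      ring

lemma pderiv_two (j : ℕ) : pderiv j (2 : MvPolynomial ℕ ℝ) = 0 := by
  rw [(map_ofNat C 2).symm, pderiv_C]

noncomputable def cA (ℓ : ℕ) : ℝ := (2 * (ℓ : ℝ) + 1) / 2

noncomputable def Xt (ℓ : ℕ) : MvPolynomial ℕ ℝ := X ℓ - if ℓ = 0 then 2 else 0

lemma pderiv_Xt (j ℓ : ℕ) : pderiv j (Xt ℓ) = if ℓ = j then 1 else 0 := by
  unfold Xt
  rw [map_sub]
  have h2 : pderiv j (if ℓ = 0 then (2 : MvPolynomial ℕ ℝ) else 0) = 0 := by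
    split_ifs
    · exact pderiv_two j
    · simp
  rw [h2, sub_zero]
  by_cases h : ℓ = j
  · subst h; rw [pderiv_X_self, if_pos rfl]
  · rw [pderiv_X_of_ne h, if_neg h]

noncomputable def Aop (m M : ℕ) (p : MvPolynomial ℕ ℝ) : MvPolynomial ℕ ℝ :=
  ∑ ℓ ∈ Finset.range M, cA ℓ • (Xt ℓ * pderiv (ℓ + m) p)

noncomputable def Bop (m : ℕ) (p : MvPolynomial ℕ ℝ) : MvPolynomial ℕ ℝ :=
  (1 / 4 : ℝ) • ∑ ℓ ∈ Finset.range m, pderiv ℓ (pderiv (m - 1 - ℓ) p)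

noncomputable def Cop (ν : ℝ) (m : ℕ) (p : MvPolynomial ℕ ℝ) : MvPolynomial ℕ ℝ :=
  if m = 0 then ((1 - 4 * ν ^ 2) / 16 : ℝ) • p else 0

noncomputable def Eop (m n : ℕ) (p : MvPolynomial ℕ ℝ) : MvPolynomial ℕ ℝ :=
  ∑ j ∈ Finset.range n, (2 * (j : ℝ) + 1) • pderiv (j + m) (pderiv (n - 1 - j) p)

lemma Cop_eq (ν : ℝ) (m : ℕ) (p : MvPolynomial ℕ ℝ) :
    Cop ν m p = (if m = 0 then ((1 - 4 * ν ^ 2) / 16 : ℝ) else 0) • p := by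
  unfold Cop; split_ifs <;> simp

lemma exists_pderiv_bound (p : MvPolynomial ℕ ℝ) :
    ∃ N, ∀ k, N ≤ k → pderiv k p = 0 := by
  refine ⟨(p.vars.sup id) + 1, fun k hk => ?_⟩
  apply pderiv_eq_zero_of_notMem_vars
  intro hmem
  have := Finset.le_sup (f := id) hmem
  simp only [id] at this
  omega

/-! ### Linearity lemmas -/

lemma Aop_add (m M : ℕ) (p q : MvPolynomial ℕ ℝ) :
    Aop m M (p + q) = Aop m M p + Aop m M q := by
  unfold Aop
  rw [← Finset.sum_add_distrib]
  refine Finset.sum_congr rfl fun ℓ _ => ?_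
  rw [map_add, mul_add, smul_add]

lemma Aop_smul (m M : ℕ) (c : ℝ) (p : MvPolynomial ℕ ℝ) :
    Aop m M (c • p) = c • Aop m M p := by
  unfold Aop
  rw [Finset.smul_sum]
  refine Finset.sum_congr rfl fun ℓ _ => ?_
  rw [(pderiv _).map_smul, mul_smul_comm, smul_comm]

lemma Bop_add (m : ℕ) (p q : MvPolynomial ℕ ℝ) :
    Bop m (p + q) = Bop m p + Bop m q := by
  unfold Bop
  rw [← smul_add, ← Finset.sum_add_distrib]
  congr 1
  refine Finset.sum_congr rfl fun ℓ _ => ?_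
  rw [map_add, map_add]

lemma Bop_smul (m : ℕ) (c : ℝ) (p : MvPolynomial ℕ ℝ) :
    Bop m (c • p) = c • Bop m p := by
  unfold Bop
  have h : ∀ ℓ : ℕ, pderiv ℓ (pderiv (m - 1 - ℓ) (c • p))
      = c • pderiv ℓ (pderiv (m - 1 - ℓ) p) := fun ℓ => by
    rw [(pderiv _).map_smul, (pderiv _).map_smul]
  simp_rw [h, ← Finset.smul_sum]
  rw [smul_comm]

/-! ### The `[A,A]` commutator -/

lemma Aop_Aop (m n M : ℕ) (p : MvPolynomial ℕ ℝ) :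
    Aop m M (Aop n M p)
      = (∑ ℓ ∈ range M, ∑ k ∈ range M,
          if k = ℓ + m then (cA ℓ * cA k) • (Xt ℓ * pderiv (k + n) p) else 0)
      + ∑ ℓ ∈ range M, ∑ k ∈ range M,
          (cA ℓ * cA k) • (Xt ℓ * (Xt k * pderiv (ℓ + m) (pderiv (k + n) p))) := by
  unfold Aop
  rw [← Finset.sum_add_distrib]
  refine Finset.sum_congr rfl fun ℓ _ => ?_
  rw [map_sum, Finset.mul_sum, Finset.smul_sum, ← Finset.sum_add_distrib]
  refine Finset.sum_congr rfl fun k _ => ?_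
  rw [(pderiv _).map_smul, pderiv_mul, pderiv_Xt]
  split_ifs with h
  · rw [one_mul, mul_smul_comm, smul_smul, mul_add, smul_add]
  · rw [zero_mul, zero_add, mul_smul_comm, smul_smul, zero_add]

lemma AA_comm (m n N M : ℕ) (p : MvPolynomial ℕ ℝ)
    (hp : ∀ k, N ≤ k → pderiv k p = 0) (hMm : N + m ≤ M) (hMn : N + n ≤ M) :
    Aop m M (Aop n M p) - Aop n M (Aop m M p)
      = ((m : ℝ) - (n : ℝ)) • Aop (m + n) M p := by
  have hT1 : ∀ m' n' : ℕ, N + m' ≤ M →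
      (∑ ℓ ∈ range M, ∑ k ∈ range M,
        if k = ℓ + m' then (cA ℓ * cA k) • (Xt ℓ * pderiv (k + n') p) else 0)
      = ∑ ℓ ∈ range M, (cA ℓ * cA (ℓ + m')) • (Xt ℓ * pderiv (ℓ + (m' + n')) p) := by
    intro m' n' hM'
    refine Finset.sum_congr rfl fun ℓ hℓ => ?_
    rw [Finset.sum_ite_eq' (range M) (ℓ + m')
      (fun k => (cA ℓ * cA k) • (Xt ℓ * pderiv (k + n') p))]
    rw [← Nat.add_assoc]
    split_ifs with h
    · rfl
    · rw [Finset.mem_range, not_lt] at h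
      rw [hp (ℓ + m' + n') (by omega), mul_zero, smul_zero]
  have hS2 : (∑ ℓ ∈ range M, ∑ k ∈ range M,
        (cA ℓ * cA k) • (Xt ℓ * (Xt k * pderiv (ℓ + m) (pderiv (k + n) p))))
      = ∑ ℓ ∈ range M, ∑ k ∈ range M,
        (cA ℓ * cA k) • (Xt ℓ * (Xt k * pderiv (ℓ + n) (pderiv (k + m) p))) := by
    rw [Finset.sum_comm]
    refine Finset.sum_congr rfl fun ℓ _ => Finset.sum_congr rfl fun k _ => ?_
    rw [pderiv_comm', mul_comm (cA k), mul_left_comm (Xt k)]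
  rw [Aop_Aop m n M p, Aop_Aop n m M p, hT1 m n hMm, hT1 n m hMn, hS2,
    add_sub_add_right_eq_sub, Nat.add_comm n m]
  unfold Aop
  rw [Finset.smul_sum, ← Finset.sum_sub_distrib]
  refine Finset.sum_congr rfl fun ℓ _ => ?_
  rw [← sub_smul, smul_smul]
  congr 1
  unfold cA
  push_cast
  ring

/-! ### The `[A,B]` commutator -/

lemma Aop_Bop (m n M : ℕ) (p : MvPolynomial ℕ ℝ) :
    Aop m M (Bop n p)
      = (1 / 4 : ℝ) • ∑ j ∈ range n, ∑ ℓ ∈ range M,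
          cA ℓ • (Xt ℓ * pderiv j (pderiv (n - 1 - j) (pderiv (ℓ + m) p))) := by
  have h1 : ∀ ℓ : ℕ, cA ℓ • (Xt ℓ * pderiv (ℓ + m) (Bop n p))
      = (1 / 4 : ℝ) • ∑ j ∈ range n,
          cA ℓ • (Xt ℓ * pderiv j (pderiv (n - 1 - j) (pderiv (ℓ + m) p))) := by
    intro ℓ
    unfold Bop
    rw [(pderiv _).map_smul, map_sum, mul_smul_comm, smul_comm (cA ℓ) ((1:ℝ)/4),
      Finset.mul_sum, Finset.smul_sum, Finset.smul_sum, Finset.smul_sum]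
    refine Finset.sum_congr rfl fun j _ => ?_
    rw [pderiv_comm' (ℓ + m) j, pderiv_comm' (ℓ + m) (n - 1 - j)]
  unfold Aop
  simp_rw [h1]
  rw [← Finset.smul_sum, Finset.sum_comm]

lemma key_second (n j ℓ : ℕ) (q : MvPolynomial ℕ ℝ) :
    pderiv j (pderiv (n - 1 - j) (Xt ℓ * q))
      = (if ℓ = n - 1 - j then pderiv j q else 0)
        + (if ℓ = j then pderiv (n - 1 - j) q else 0)
        + Xt ℓ * pderiv j (pderiv (n - 1 - j) q) := by
  rw [pderiv_mul, pderiv_Xt, ite_mul, one_mul, zero_mul, map_add,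
    apply_ite (pderiv j), map_zero, pderiv_mul, pderiv_Xt, ite_mul, one_mul, zero_mul,
    add_assoc]

lemma Bop_Aop (m n M : ℕ) (p : MvPolynomial ℕ ℝ) (hnM : n ≤ M) :
    Bop n (Aop m M p)
      = Aop m M (Bop n p)
        + (1 / 4 : ℝ) • ∑ j ∈ range n,
            (cA (n - 1 - j) • pderiv j (pderiv ((n - 1 - j) + m) p)
              + cA j • pderiv (n - 1 - j) (pderiv (j + m) p)) := by
  rw [Aop_Bop, ← smul_add, ← Finset.sum_add_distrib]
  unfold Bop Aop
  rw [Finset.smul_sum, Finset.smul_sum]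
  refine Finset.sum_congr rfl fun j hj => ?_
  rw [Finset.mem_range] at hj
  congr 1
  rw [map_sum, map_sum]
  have hterm : ∀ ℓ : ℕ,
      pderiv j (pderiv (n - 1 - j) (cA ℓ • (Xt ℓ * pderiv (ℓ + m) p)))
        = (if ℓ = n - 1 - j then cA ℓ • pderiv j (pderiv (ℓ + m) p) else 0)
          + ((if ℓ = j then cA ℓ • pderiv (n - 1 - j) (pderiv (ℓ + m) p) else 0)
            + cA ℓ • (Xt ℓ * pderiv j (pderiv (n - 1 - j) (pderiv (ℓ + m) p)))) := by
    intro ℓ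
    rw [(pderiv _).map_smul, (pderiv _).map_smul, key_second n j ℓ, smul_add, smul_add,
      smul_ite, smul_ite]
    simp only [smul_zero]
    rw [add_assoc]
  simp_rw [hterm]
  rw [Finset.sum_add_distrib, Finset.sum_add_distrib]
  rw [Finset.sum_ite_eq' (range M) (n - 1 - j)
      (fun ℓ => cA ℓ • pderiv j (pderiv (ℓ + m) p)),
    Finset.sum_ite_eq' (range M) j
      (fun ℓ => cA ℓ • pderiv (n - 1 - j) (pderiv (ℓ + m) p)),
    if_pos (Finset.mem_range.2 (by omega)), if_pos (Finset.mem_range.2 (by omega))]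
  abel

lemma AB_comm (m n M : ℕ) (p : MvPolynomial ℕ ℝ) (hnM : n ≤ M) :
    Aop m M (Bop n p) - Bop n (Aop m M p) = (-(1 / 4) : ℝ) • Eop m n p := by
  rw [Bop_Aop m n M p hnM]
  have hrefl : (∑ j ∈ range n, cA (n - 1 - j) • pderiv j (pderiv ((n - 1 - j) + m) p))
      = ∑ j ∈ range n, cA j • pderiv (n - 1 - j) (pderiv (j + m) p) := by
    rw [← Finset.sum_range_reflect (fun j => cA j • pderiv (n - 1 - j) (pderiv (j + m) p)) n]
    refine Finset.sum_congr rfl fun j hj => ?_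
    rw [Finset.mem_range] at hj
    have h1 : n - 1 - (n - 1 - j) = j := by omega
    rw [h1]
  rw [sub_add_cancel_left, ← neg_smul]
  congr 1
  unfold Eop
  rw [Finset.sum_add_distrib, hrefl, ← Finset.sum_add_distrib]
  refine Finset.sum_congr rfl fun j _ => ?_
  rw [pderiv_comm' (j + m) (n - 1 - j), ← add_smul]
  congr 1
  unfold cA
  ring

/-! ### The combinatorial identity -/

lemma E_identity (m n : ℕ) (p : MvPolynomial ℕ ℝ) :
    Eop n m p - Eop m n p
      = ((m : ℝ) - (n : ℝ)) • ∑ j ∈ range (m + n), pderiv j (pderiv (m + n - 1 - j) p) := by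
  set G : ℕ → MvPolynomial ℕ ℝ := fun j => pderiv j (pderiv (m + n - 1 - j) p) with hGdef
  have hG : ∀ j, j < m + n → G (m + n - 1 - j) = G j := by
    intro j hj
    simp only [hGdef]
    have h1 : m + n - 1 - (m + n - 1 - j) = j := by omega
    rw [h1, pderiv_comm']
  set h : ℕ → ℝ := fun k =>
    (if n ≤ k then 2 * ((k : ℝ) - (n : ℝ)) + 1 else 0)
      - (if m ≤ k then 2 * ((k : ℝ) - (m : ℝ)) + 1 else 0) with hhdef
  have e1 : Eop n m p = ∑ k ∈ range (m + n),
      (if n ≤ k then 2 * ((k : ℝ) - (n : ℝ)) + 1 else 0) • G k := by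
    rw [show m + n = n + m by omega, Finset.sum_range_add]
    have z1 : ∑ k ∈ range n,
        (if n ≤ k then 2 * ((k : ℝ) - (n : ℝ)) + 1 else 0) • G k = 0 := by
      refine Finset.sum_eq_zero fun k hk => ?_
      rw [Finset.mem_range] at hk
      rw [if_neg (by omega), zero_smul]
    rw [z1, zero_add]
    unfold Eop
    refine Finset.sum_congr rfl fun j hj => ?_
    rw [Finset.mem_range] at hj
    rw [if_pos (by omega)]
    have h1 : m - 1 - j = n + m - 1 - (n + j) := by omega
    have h2 : j + n = n + j := by omega
    have h3 : ((n + j : ℕ) : ℝ) - (n : ℝ) = (j : ℝ) := by push_cast; ring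
    simp only [hGdef]
    rw [show m + n = n + m from by omega] at *
    rw [h1, h2, h3]
  have e2 : Eop m n p = ∑ k ∈ range (m + n),
      (if m ≤ k then 2 * ((k : ℝ) - (m : ℝ)) + 1 else 0) • G k := by
    rw [Finset.sum_range_add]
    have z1 : ∑ k ∈ range m,
        (if m ≤ k then 2 * ((k : ℝ) - (m : ℝ)) + 1 else 0) • G k = 0 := by
      refine Finset.sum_eq_zero fun k hk => ?_
      rw [Finset.mem_range] at hk
      rw [if_neg (by omega), zero_smul]
    rw [z1, zero_add]
    unfold Eop
    refine Finset.sum_congr rfl fun j hj => ?_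
    rw [Finset.mem_range] at hj
    rw [if_pos (by omega)]
    have h1 : n - 1 - j = m + n - 1 - (m + j) := by omega
    have h2 : j + m = m + j := by omega
    have h3 : ((m + j : ℕ) : ℝ) - (m : ℝ) = (j : ℝ) := by push_cast; ring
    simp only [hGdef]
    rw [h1, h2, h3]
  rw [e1, e2, ← Finset.sum_sub_distrib]
  have e3 : ∀ k, (if n ≤ k then 2 * ((k : ℝ) - (n : ℝ)) + 1 else 0) • G k
      - (if m ≤ k then 2 * ((k : ℝ) - (m : ℝ)) + 1 else 0) • G k = h k • G k := by
    intro k; rw [hhdef, ← sub_smul]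
  simp_rw [e3]
  have hrefl : ∑ k ∈ range (m + n), h k • G k
      = ∑ k ∈ range (m + n), h (m + n - 1 - k) • G k := by
    rw [← Finset.sum_range_reflect (fun k => h (m + n - 1 - k) • G k) (m + n)]
    refine Finset.sum_congr rfl fun k hk => ?_
    rw [Finset.mem_range] at hk
    have h1 : m + n - 1 - (m + n - 1 - k) = k := by omega
    rw [h1, hG k hk]
  have hkey : ∀ k, k < m + n → h k + h (m + n - 1 - k) = 2 * ((m : ℝ) - (n : ℝ)) := by
    intro k hk
    have hc : ((m + n - 1 - k : ℕ) : ℝ) = (m : ℝ) + (n : ℝ) - 1 - (k : ℝ) := by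
      have h1 : m + n - 1 - k = m + n - (1 + k) := by omega
      rw [h1, Nat.cast_sub (by omega)]
      push_cast; ring
    simp only [hhdef]
    split_ifs <;>
      first
        | (exfalso; omega)
        | (rw [hc]; push_cast; ring)
        | (push_cast; ring)
  have hdouble : (2 : ℝ) • ∑ k ∈ range (m + n), h k • G k
      = (2 : ℝ) • (((m : ℝ) - (n : ℝ)) • ∑ k ∈ range (m + n), G k) := by
    nth_rewrite 1 [two_smul]
    nth_rewrite 2 [hrefl]
    rw [← Finset.sum_add_distrib, Finset.smul_sum, Finset.smul_sum]
    refine Finset.sum_congr rfl fun k hk => ?_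
    rw [Finset.mem_range] at hk
    rw [← add_smul, hkey k hk, smul_smul]
  have hhalf : ∑ k ∈ range (m + n), h k • G k
      = ((1 : ℝ)/2) • ((2 : ℝ) • ∑ k ∈ range (m + n), h k • G k) := by
    rw [smul_smul]; norm_num
  rw [hhalf, hdouble, smul_smul]
  norm_num

/-! ### The `[B,B]` commutator -/

lemma swap4 (a b c d : ℕ) (q : MvPolynomial ℕ ℝ) :
    pderiv a (pderiv b (pderiv c (pderiv d q)))
      = pderiv c (pderiv d (pderiv a (pderiv b q))) := by
  rw [pderiv_comm' b c (pderiv d q), pderiv_comm' a c (pderiv b (pderiv d q)),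
    pderiv_comm' b d q, pderiv_comm' a d (pderiv b q)]

lemma Bop_expand (m n : ℕ) (p : MvPolynomial ℕ ℝ) :
    Bop m (Bop n p) = (1 / 16 : ℝ) • ∑ j ∈ range m, ∑ k ∈ range n,
      pderiv j (pderiv (m - 1 - j) (pderiv k (pderiv (n - 1 - k) p))) := by
  unfold Bop
  simp only [Derivation.map_smul, map_sum, Finset.smul_sum]
  refine Finset.sum_congr rfl fun j _ => Finset.sum_congr rfl fun k _ => ?_
  rw [smul_smul]
  norm_num

lemma BB_comm (m n : ℕ) (p : MvPolynomial ℕ ℝ) :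
    Bop m (Bop n p) = Bop n (Bop m p) := by
  rw [Bop_expand m n, Bop_expand n m]
  congr 1
  rw [Finset.sum_comm]
  exact Finset.sum_congr rfl fun k _ => Finset.sum_congr rfl fun j _ => swap4 _ _ _ _ _

lemma virasoroL_eq (ν : ℝ) (m M : ℕ) (p : MvPolynomial ℕ ℝ)
    (hM : ∀ k, M ≤ k → pderiv k p = 0) :
    virasoroL ν m p = Aop m M p + Bop m p + Cop ν m p := by
  unfold virasoroL Aop Bop Cop cA Xt
  congr 1
  congr 1
  apply finsum_eq_finset_sum_of_support_subset
  intro ℓ hℓ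
  simp only [Function.mem_support] at hℓ
  simp only [Finset.coe_range, Set.mem_Iio]
  by_contra hc
  push_neg at hc
  have : pderiv (ℓ + m) p = 0 := hM _ (by omega)
  simp [this] at hℓ

/-! ### Main theorem -/

/-- The operators `L_m` satisfy the Virasoro commutation relations
`[L_m, L_n] = (m - n) L_{m+n}` for all `m, n ≥ 0`. -/
theorem virasoro_commutation (ν : ℝ) (m n : ℕ) (p : MvPolynomial ℕ ℝ) :
    virasoroL ν m (virasoroL ν n p) - virasoroL ν n (virasoroL ν m p)
      = ((m : ℝ) - (n : ℝ)) • virasoroL ν (m + n) p := by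
  obtain ⟨N₀, h₀⟩ := exists_pderiv_bound p
  obtain ⟨N₁, h₁⟩ := exists_pderiv_bound (virasoroL ν n p)
  obtain ⟨N₂, h₂⟩ := exists_pderiv_bound (virasoroL ν m p)
  set M := N₀ + N₁ + N₂ + m + n + 1 with hMdef
  have hbp : ∀ k, M ≤ k → pderiv k p = 0 := fun k hk => h₀ k (by omega)
  have e_n : virasoroL ν n p = Aop n M p + Bop n p + Cop ν n p :=
    virasoroL_eq ν n M p hbp
  have e_m : virasoroL ν m p = Aop m M p + Bop m p + Cop ν m p :=
    virasoroL_eq ν m M p hbp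
  have e_mn : virasoroL ν (m + n) p = Aop (m + n) M p + Bop (m + n) p + Cop ν (m + n) p :=
    virasoroL_eq ν (m + n) M p hbp
  have e_om : virasoroL ν m (virasoroL ν n p)
      = Aop m M (virasoroL ν n p) + Bop m (virasoroL ν n p) + Cop ν m (virasoroL ν n p) :=
    virasoroL_eq ν m M _ (fun k hk => h₁ k (by omega))
  have e_on : virasoroL ν n (virasoroL ν m p)
      = Aop n M (virasoroL ν m p) + Bop n (virasoroL ν m p) + Cop ν n (virasoroL ν m p) :=
    virasoroL_eq ν n M _ (fun k hk => h₂ k (by omega))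
  rw [e_om, e_on, e_mn, e_n, e_m]
  -- commutator lemmas
  have key1 : Aop m M (Aop n M p) - Aop n M (Aop m M p)
      = ((m : ℝ) - (n : ℝ)) • Aop (m + n) M p :=
    AA_comm m n N₀ M p (fun k hk => h₀ k hk) (by omega) (by omega)
  have key2 : (Aop m M (Bop n p) - Bop n (Aop m M p))
        - (Aop n M (Bop m p) - Bop m (Aop n M p))
      = ((m : ℝ) - (n : ℝ)) • Bop (m + n) p := by
    rw [AB_comm m n M p (by omega), AB_comm n m M p (by omega), ← smul_sub]
    have hE := E_identity m n p
    have : Eop m n p - Eop n m p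
        = -(((m : ℝ) - (n : ℝ)) • ∑ j ∈ range (m + n), pderiv j (pderiv (m + n - 1 - j) p)) := by
      rw [← hE]; abel
    rw [this]
    unfold Bop
    module
  have key3 : Bop m (Bop n p) - Bop n (Bop m p) = 0 := by
    rw [BB_comm]; exact sub_self _
  have hC0 : ((m : ℝ) - (n : ℝ)) • Cop ν (m + n) p = 0 := by
    unfold Cop
    split_ifs with h
    · have hm : m = 0 := by omega
      have hn : n = 0 := by omega
      subst hm; subst hn
      norm_num
    · exact smul_zero _
  -- expand all the C operators as scalar actions and distribute
  simp only [Cop_eq, Aop_add, Bop_add, Aop_smul, Bop_smul, smul_add] at *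
  rw [hC0]
  linear_combination (norm := module) key1 + key2 + key3
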